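/- arXiv:1607.06982 — 8 statements merged into one kernel-verified Lean document; each statement's English description precedes it below -/
import Mathlib

section
/- For any integer m ≥ 1, variable x, and sequence a = (a_1, a_2, ...), the coefficient of t^m in (1/(1-tx)) · ∏_{j=1}^{m}(1+t·a_j) equals the factorial power (x|a)^m = (x+a_1)(x+a_2)···(x+a_m). -/
open PowerSeries Finset

noncomputable section

/-- `geom x` is the formal power series `1/(1-tx) = ∑ xⁿ tⁿ`. -/
def geom {R : Type*} [CommRing R] (x : R) : PowerSeries R := PowerSeries.mk fun n => x ^ n

/-- `lin a` is the formal power series `1 + t·a`. -/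
def lin {R : Type*} [CommRing R] (a : R) : PowerSeries R :=
  1 + PowerSeries.C a * PowerSeries.X

/-- Factorial power `(x|a)^m = (x+a₁)(x+a₂)···(x+a_m)`. -/
def factPow {R : Type*} [CommRing R] (x : R) (a : ℕ → R) (m : ℕ) : R :=
  ∏ k ∈ Finset.range m, (x + a (k + 1))

lemma aux_coeff {R : Type*} [CommRing R] (x : R) (a : ℕ → R) :
    ∀ m n : ℕ, m ≤ n →
      PowerSeries.coeff n (geom x * ∏ j ∈ Finset.range m, lin (a (j + 1))) =
        x ^ (n - m) * factPow x a m := by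
  intro m
  induction m with
  | zero =>
      intro n _
      simp [geom, factPow]
  | succ m ih =>
      intro n hn
      obtain ⟨n', rfl⟩ : ∃ n', n = n' + 1 := ⟨n - 1, by omega⟩
      have hmn : m ≤ n' := by omega
      have : geom x * ∏ j ∈ Finset.range (m + 1), lin (a (j + 1)) =
          (geom x * ∏ j ∈ Finset.range m, lin (a (j + 1))) +
          PowerSeries.C (a (m + 1)) *
            ((geom x * ∏ j ∈ Finset.range m, lin (a (j + 1))) * PowerSeries.X) := by
        rw [Finset.prod_range_succ, lin]
        ring
      rw [this, map_add, PowerSeries.coeff_C_mul, PowerSeries.coeff_succ_mul_X,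
        ih _ (by omega), ih _ hmn]
      simp only [factPow, Finset.prod_range_succ]
      have h1 : n' + 1 - (m + 1) = n' - m := by omega
      have h2 : n' + 1 - m = (n' - m) + 1 := by omega
      rw [h1, h2, pow_succ]
      ring

/-- Coefficient of tᵐ in (1/(1-tx))·∏_{j=1}^m (1+t aⱼ) equals the factorial power (x|a)^m. -/
theorem stmt0 {R : Type*} [CommRing R] (x : R) (a : ℕ → R) (m : ℕ) (hm : 1 ≤ m) :
    PowerSeries.coeff m (geom x * ∏ j ∈ Finset.range m, lin (a (j + 1))) =
      factPow x a m := by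
  rw [aux_coeff x a m m le_rfl]
  simp
end
end

section
/- For any integer m ≥ 0, invertible variable x with inverse x̄ = x^{-1}, and sequence a, the coefficient of t^m in 1/((1-tx)(1-tx̄)) · ∏_{j=1}^{m}(1+t·a_j) equals (x·(x|a)^m − x̄·(x̄|a)^m)/(x − x̄). -/
open PowerSeries Finset

noncomputable section

lemma coeff_mul_lin {R : Type*} [CommRing R] (f : PowerSeries R) (a : R) (n : ℕ) :
    PowerSeries.coeff (n + 1) (f * lin a) =
      PowerSeries.coeff (n + 1) f + a * PowerSeries.coeff n f := by
  have : f * lin a = f + (PowerSeries.C a * f) * PowerSeries.X := by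
    rw [lin]; ring
  rw [this, map_add, PowerSeries.coeff_succ_mul_X, PowerSeries.coeff_C_mul]

lemma coeff_geom_mul_geom {R : Type*} [CommRing R] (x y : R) (n : ℕ) :
    PowerSeries.coeff n (geom x * geom y) = ∑ i ∈ range (n + 1), x ^ i * y ^ (n - i) := by
  rw [PowerSeries.coeff_mul, Finset.Nat.sum_antidiagonal_eq_sum_range_succ_mk]
  simp [geom]

lemma base {R : Type*} [CommRing R] (x y : R) (n : ℕ) :
    (x - y) * ∑ i ∈ range (n + 1), x ^ i * y ^ (n - i) = x ^ (n + 1) - y ^ (n + 1) := by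
  induction n with
  | zero => simp
  | succ n ih =>
    rw [Finset.sum_range_succ]
    have h : ∑ i ∈ range (n + 1), x ^ i * y ^ (n + 1 - i) =
        y * ∑ i ∈ range (n + 1), x ^ i * y ^ (n - i) := by
      rw [Finset.mul_sum]
      refine Finset.sum_congr rfl fun i hi => ?_
      rw [Finset.mem_range] at hi
      have : n + 1 - i = (n - i) + 1 := by omega
      rw [this, pow_succ]
      ring
    rw [h]
    simp only [Nat.sub_self, pow_zero, mul_one]
    linear_combination y * ih

lemma key {K : Type*} [Field K] (x : K) (a : ℕ → K) (m k : ℕ) :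
    (x - x⁻¹) * PowerSeries.coeff (m + k)
        (geom x * geom x⁻¹ * ∏ j ∈ Finset.range m, lin (a (j + 1))) =
      x ^ (k + 1) * factPow x a m - (x⁻¹) ^ (k + 1) * factPow x⁻¹ a m := by
  induction m generalizing k with
  | zero =>
    simp only [Nat.zero_add, range_zero, prod_empty, mul_one, factPow]
    rw [coeff_geom_mul_geom, base]
  | succ m ih =>
    rw [Finset.prod_range_succ, ← mul_assoc]
    have hn : m + 1 + k = (m + k) + 1 := by omega
    rw [hn, coeff_mul_lin, mul_add]
    have hn2 : m + k + 1 = m + (k + 1) := by omega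
    rw [hn2, ih (k + 1), mul_comm (x - x⁻¹) _, mul_assoc, mul_comm _ (x - x⁻¹), ih k]
    simp only [factPow, Finset.prod_range_succ]
    ring

/-- Coefficient of tᵐ in 1/((1-tx)(1-tx̄))·∏_{j=1}^m (1+t aⱼ)
equals (x(x|a)^m − x̄(x̄|a)^m)/(x−x̄). -/
theorem stmt1 {K : Type*} [Field K] (x : K) (a : ℕ → K) (m : ℕ)
    (hx : x ≠ 0) (hxx : x ≠ x⁻¹) :
    PowerSeries.coeff m (geom x * geom x⁻¹ * ∏ j ∈ Finset.range m, lin (a (j + 1))) =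
      (x * factPow x a m - x⁻¹ * factPow x⁻¹ a m) / (x - x⁻¹) := by
  have h := key x a m 0
  rw [Nat.add_zero] at h
  have hne : x - x⁻¹ ≠ 0 := sub_ne_zero.mpr hxx
  rw [eq_div_iff hne]
  linear_combination h
end
end

section
/- For any integer m ≥ 0, invertible variable x with square root x^{1/2} and x̄ = x^{-1}, and sequence a, the coefficient of t^m in (1+t)/((1-tx)(1-tx̄)) · ∏_{j=1}^{m}(1+t·a_j) equals (x^{1/2}·(x|a)^m − x̄^{1/2}·(x̄|a)^m)/(x^{1/2} − x̄^{1/2}). -/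
open PowerSeries Finset

noncomputable section

lemma geom_inv {R : Type*} [CommRing R] (x : R) :
    (1 - PowerSeries.C x * PowerSeries.X) * geom x = 1 := by
  ext n
  cases n with
  | zero => simp [geom]
  | succ k =>
    rw [sub_mul, one_mul, map_sub, mul_assoc, PowerSeries.coeff_C_mul,
      PowerSeries.coeff_succ_X_mul, geom]
    simp [pow_succ, mul_comm]

lemma coeff_geom_prod {R : Type*} [CommRing R] (x : R) (a : ℕ → R) (m : ℕ) :
    ∀ n, PowerSeries.coeff (m + n) (geom x * ∏ j ∈ Finset.range m, lin (a (j + 1)))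
      = x ^ n * factPow x a m := by
  induction m with
  | zero => intro n; simp [geom, factPow]
  | succ m ih =>
    intro n
    rw [Finset.prod_range_succ, show geom x * ((∏ j ∈ Finset.range m, lin (a (j+1))) * lin (a (m+1)))
      = (geom x * ∏ j ∈ Finset.range m, lin (a (j+1)))
        + (geom x * ∏ j ∈ Finset.range m, lin (a (j+1))) * PowerSeries.C (a (m+1))
          * PowerSeries.X by rw [lin]; ring]
    rw [map_add, show m + 1 + n = m + (n+1) by ring, ih (n+1),
      show m + (n+1) = (m + n) + 1 by ring, PowerSeries.coeff_succ_mul_X,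
      PowerSeries.coeff_mul_C, ih n, factPow, factPow, Finset.prod_range_succ, pow_succ]
    ring

/-- Coefficient of tᵐ in (1+t)/((1-tx)(1-tx̄))·∏_{j=1}^m (1+t aⱼ)
equals (x^{1/2}(x|a)^m − x̄^{1/2}(x̄|a)^m)/(x^{1/2}−x̄^{1/2}), where s = x^{1/2}
and s⁻¹ = x̄^{1/2}. -/
theorem stmt2 {K : Type*} [Field K] (x s : K) (a : ℕ → K) (m : ℕ)
    (hx : x ≠ 0) (hs : s ^ 2 = x) (hss : s ≠ s⁻¹) :
    PowerSeries.coeff m ((1 + PowerSeries.X) * geom x * geom x⁻¹ *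
        ∏ j ∈ Finset.range m, lin (a (j + 1))) =
      (s * factPow x a m - s⁻¹ * factPow x⁻¹ a m) / (s - s⁻¹) := by
  have hs0 : s ≠ 0 := by rintro rfl; exact hx (by simpa using hs.symm)
  have hc : s - s⁻¹ ≠ 0 := sub_ne_zero.mpr hss
  have e1 : s⁻¹ * x = s := by field_simp [← hs]; exact hs.symm
  have e2 : s * x⁻¹ = s⁻¹ := by field_simp [← hs]; exact hs
  set u : PowerSeries K := 1 - PowerSeries.C x * PowerSeries.X with hu
  set v : PowerSeries K := 1 - PowerSeries.C x⁻¹ * PowerSeries.X with hv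
  have hu0 : u ≠ 0 := fun h => by
    have := congrArg (PowerSeries.constantCoeff) h; simp [hu] at this
  have hv0 : v ≠ 0 := fun h => by
    have := congrArg (PowerSeries.constantCoeff) h; simp [hv] at this
  have h1 : u * geom x = 1 := geom_inv x
  have h2 : v * geom x⁻¹ = 1 := geom_inv x⁻¹
  have h3 : PowerSeries.C s * PowerSeries.C x⁻¹ = PowerSeries.C s⁻¹ := by
    rw [← map_mul]; exact congrArg _ e2
  have h4 : PowerSeries.C s⁻¹ * PowerSeries.C x = PowerSeries.C s := by
    rw [← map_mul]; exact congrArg _ e1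
  have h5 : PowerSeries.C (s - s⁻¹) = PowerSeries.C s - PowerSeries.C s⁻¹ := map_sub _ _ _
  have key : PowerSeries.C (s - s⁻¹) * ((1 + PowerSeries.X) * geom x * geom x⁻¹) =
      PowerSeries.C s * geom x - PowerSeries.C s⁻¹ * geom x⁻¹ := by
    apply mul_left_cancel₀ (mul_ne_zero hu0 hv0)
    calc u * v * (PowerSeries.C (s - s⁻¹) * ((1 + PowerSeries.X) * geom x * geom x⁻¹))
        = (PowerSeries.C (s - s⁻¹) * (1 + PowerSeries.X)) * ((u * geom x) * (v * geom x⁻¹)) := by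
          ring
      _ = PowerSeries.C (s - s⁻¹) * (1 + PowerSeries.X) := by rw [h1, h2]; ring
      _ = PowerSeries.C s * v - PowerSeries.C s⁻¹ * u := by
          rw [hu, hv]; linear_combination (1 + PowerSeries.X) * h5
            + PowerSeries.X * h3 - PowerSeries.X * h4
      _ = (PowerSeries.C s * v) * (u * geom x) - (PowerSeries.C s⁻¹ * u) * (v * geom x⁻¹) := by
          rw [h1, h2]; ring
      _ = u * v * (PowerSeries.C s * geom x - PowerSeries.C s⁻¹ * geom x⁻¹) := by ring
  have h6 : (s - s⁻¹) * PowerSeries.coeff m ((1 + PowerSeries.X) * geom x * geom x⁻¹ *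
        ∏ j ∈ Finset.range m, lin (a (j + 1)))
      = s * factPow x a m - s⁻¹ * factPow x⁻¹ a m := by
    rw [← PowerSeries.coeff_C_mul, show PowerSeries.C (s - s⁻¹) *
        ((1 + PowerSeries.X) * geom x * geom x⁻¹ * ∏ j ∈ Finset.range m, lin (a (j + 1)))
      = (PowerSeries.C (s - s⁻¹) * ((1 + PowerSeries.X) * geom x * geom x⁻¹))
          * ∏ j ∈ Finset.range m, lin (a (j + 1)) by ring, key, sub_mul, map_sub,
      mul_assoc, mul_assoc, PowerSeries.coeff_C_mul, PowerSeries.coeff_C_mul]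
    have g1 := coeff_geom_prod x a m 0
    have g2 := coeff_geom_prod x⁻¹ a m 0
    simp only [add_zero, pow_zero, one_mul] at g1 g2
    rw [g1, g2]
  rw [eq_div_iff hc]
  linear_combination h6
end
end

section
/- Define h^{sp}_m(x_i, x̄_i, ..., x_j, x̄_j | a) as the coefficient of t^m in ∏_{ℓ=i}^{j} 1/((1-t x_ℓ)(1-t x̄_ℓ)) · ∏_{k=1}^{m+j-i}(1+t a_k). Then for 1 ≤ i < j and m ≥ 1: h^{sp}_m(x_i,x̄_i,...,x_{j-1},x̄_{j-1}|a) − h^{sp}_m(x_{i+1},x̄_{i+1},...,x_j,x̄_j|a) = (x_i − x_j)(1 − x̄_i x̄_j)·h^{sp}_{m-1}(x_i,x̄_i,...,x_j,x̄_j|a). -/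
open PowerSeries Finset

noncomputable section

/-- Symplectic analogue: h^{sp}ₘ on pairs (x_ℓ, x̄_ℓ), ℓ = i..j-1, minus that on ℓ = i+1..j,
equals (x_i−x_j)(1−x̄_i x̄_j)·h^{sp}_{m-1} on ℓ = i..j. -/
theorem stmt4 {R : Type*} [CommRing R] (x xb a : ℕ → R) (hinv : ∀ ℓ, x ℓ * xb ℓ = 1)
    (i j m : ℕ) (hij : i < j) (hm : 1 ≤ m) :
    PowerSeries.coeff m ((∏ ℓ ∈ Finset.Icc i (j - 1), geom (x ℓ) * geom (xb ℓ)) *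
        ∏ k ∈ Finset.range (m + (j - 1) - i), lin (a (k + 1)))
    - PowerSeries.coeff m ((∏ ℓ ∈ Finset.Icc (i + 1) j, geom (x ℓ) * geom (xb ℓ)) *
        ∏ k ∈ Finset.range (m + j - (i + 1)), lin (a (k + 1)))
    = (x i - x j) * (1 - xb i * xb j) *
        PowerSeries.coeff (m - 1) ((∏ ℓ ∈ Finset.Icc i j, geom (x ℓ) * geom (xb ℓ)) *
          ∏ k ∈ Finset.range ((m - 1) + j - i), lin (a (k + 1))) := by
  -- unify the ranges of the lin products
  have hr1 : m + (j - 1) - i = m - 1 + j - i := by omega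
  have hr2 : m + j - (i + 1) = m - 1 + j - i := by omega
  rw [hr1, hr2]
  set L : PowerSeries R := ∏ k ∈ Finset.range (m - 1 + j - i), lin (a (k + 1)) with hL
  set Gi := geom (x i) * geom (xb i) with hGi
  set Gj := geom (x j) * geom (xb j) with hGj
  set A : PowerSeries R := ∏ ℓ ∈ Finset.Icc (i + 1) (j - 1), geom (x ℓ) * geom (xb ℓ) with hA
  have hs1 : Finset.Icc i (j - 1) = insert i (Finset.Icc (i + 1) (j - 1)) := by
    ext t; simp [Finset.mem_Icc]; omega
  have hs2 : Finset.Icc (i + 1) j = insert j (Finset.Icc (i + 1) (j - 1)) := by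
    ext t; simp [Finset.mem_Icc]; omega
  have hs3 : Finset.Icc i j = insert i (insert j (Finset.Icc (i + 1) (j - 1))) := by
    ext t; simp [Finset.mem_Icc]; omega
  have hp1 : (∏ ℓ ∈ Finset.Icc i (j - 1), geom (x ℓ) * geom (xb ℓ)) = Gi * A := by
    rw [hs1, Finset.prod_insert (by simp)]
  have hp2 : (∏ ℓ ∈ Finset.Icc (i + 1) j, geom (x ℓ) * geom (xb ℓ)) = Gj * A := by
    rw [hs2, Finset.prod_insert (by simp; omega)]
  have hp3 : (∏ ℓ ∈ Finset.Icc i j, geom (x ℓ) * geom (xb ℓ)) = Gi * (Gj * A) := by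
    rw [hs3, Finset.prod_insert (by simp; omega), Finset.prod_insert (by simp; omega)]
  rw [hp1, hp2, hp3]
  -- the key power series identity
  have hQ : ∀ ℓ, ((1 - PowerSeries.C (x ℓ) * X) * (1 - PowerSeries.C (xb ℓ) * X)) *
      (geom (x ℓ) * geom (xb ℓ)) = 1 := fun ℓ => by
    rw [mul_mul_mul_comm, geom_inv, geom_inv, one_mul]
  have hc : (x i - x j) * (1 - xb i * xb j) = x i + xb i - x j - xb j := by
    linear_combination (-xb j) * hinv i + xb i * hinv j
  have hCc : (PowerSeries.C ((x i - x j) * (1 - xb i * xb j))) * X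
      = (1 - PowerSeries.C (x j) * X) * (1 - PowerSeries.C (xb j) * X)
        - (1 - PowerSeries.C (x i) * X) * (1 - PowerSeries.C (xb i) * X) := by
    have e1 : (PowerSeries.C (x i)) * PowerSeries.C (xb i) = 1 := by
      rw [← map_mul, hinv, map_one]
    have e2 : (PowerSeries.C (x j)) * PowerSeries.C (xb j) = 1 := by
      rw [← map_mul, hinv, map_one]
    rw [hc, map_sub, map_sub, map_add]
    linear_combination (X : PowerSeries R) ^ 2 * e1 - (X : PowerSeries R) ^ 2 * e2
  have key : Gi - Gj = PowerSeries.C ((x i - x j) * (1 - xb i * xb j)) * X * (Gi * Gj) := by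
    have h1 := hQ i
    have h2 := hQ j
    rw [hGi, hGj, hCc]
    linear_combination (geom (x j) * geom (xb j)) * h1 - (geom (x i) * geom (xb i)) * h2
  -- finish
  obtain ⟨n, rfl⟩ : ∃ n, m = n + 1 := ⟨m - 1, by omega⟩
  rw [← map_sub]
  have : Gi * A * L - Gj * A * L = (Gi - Gj) * (A * L) := by ring
  rw [this, key]
  rw [show PowerSeries.C ((x i - x j) * (1 - xb i * xb j)) * X * (Gi * Gj) * (A * L)
      = PowerSeries.C ((x i - x j) * (1 - xb i * xb j)) * (X * (Gi * (Gj * A) * L)) by ring]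
  rw [coeff_C_mul, PowerSeries.coeff_succ_X_mul]
  simp
end
end

section
/- The n×n determinant det(h_{n-j}(x_i | a))_{1≤i,j≤n}, where h_m(x|a) = (x|a)^m = (x+a_1)···(x+a_m) is the one-variable factorial power, equals the Vandermonde product ∏_{1≤i<j≤n}(x_i − x_j). -/
open PowerSeries Finset

noncomputable section

lemma prod_Ioi_rev {R : Type*} [CommMonoid R] {n : ℕ} (g : Fin n → Fin n → R) :
    ∏ i : Fin n, ∏ j ∈ Finset.Ioi i, g (Fin.rev j) (Fin.rev i) =
      ∏ i : Fin n, ∏ j ∈ Finset.Ioi i, g i j := by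
  rw [Finset.prod_sigma', Finset.prod_sigma']
  refine Finset.prod_nbij' (fun p => ⟨Fin.rev p.2, Fin.rev p.1⟩)
    (fun p => ⟨Fin.rev p.2, Fin.rev p.1⟩) ?_ ?_ ?_ ?_ ?_ <;>
    simp [Fin.rev_lt_rev]

/-- The determinant det((x_i|a)^{n-j}) equals the Vandermonde product ∏_{i<j}(x_i−x_j). -/
theorem stmt6 {R : Type*} [CommRing R] (n : ℕ) (x : Fin n → R) (a : ℕ → R) :
    Matrix.det (Matrix.of fun i j : Fin n => factPow (x i) a (n - 1 - (j : ℕ))) =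
      ∏ i : Fin n, ∏ j ∈ Finset.Ioi i, (x i - x j) := by
  classical
  nontriviality R
  set p : Fin n → Polynomial R := fun j =>
    ∏ k ∈ Finset.range (j : ℕ), (Polynomial.X + Polynomial.C (a (k + 1))) with hp
  have h_deg : ∀ j : Fin n, (p j).natDegree = (j : ℕ) := by
    intro j
    rw [hp]
    simp only
    rw [Polynomial.natDegree_prod_of_monic _ _ fun k _ => Polynomial.monic_X_add_C _]
    simp [Polynomial.natDegree_X_add_C, Polynomial.natDegree_X]
  have h_monic : ∀ j : Fin n, (p j).Monic := fun j =>
    Polynomial.monic_prod_of_monic _ _ fun k _ => Polynomial.monic_X_add_C _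
  have heval : ∀ (y : R) (j : Fin n), (p j).eval y = factPow y a (j : ℕ) := by
    intro y j
    simp [hp, factPow, Polynomial.eval_prod]
  -- The matrix equals N.submatrix id Fin.rev ... instead use submatrix rev rev trick
  have key : (Matrix.of fun i j : Fin n => factPow (x i) a (n - 1 - (j : ℕ))) =
      (Matrix.of fun i j : Fin n => (p j).eval ((x ∘ Fin.rev) i)).submatrix
        Fin.revPerm Fin.revPerm := by
    ext i j
    simp only [Matrix.submatrix_apply, Matrix.of_apply, Function.comp_apply, Fin.revPerm_apply,
      Fin.rev_rev, heval]
    congr 1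
    rw [Fin.val_rev]
    omega
  rw [key, Matrix.det_submatrix_equiv_self Fin.revPerm,
    ← Matrix.det_eval_matrixOfPolynomials_eq_det_vandermonde (x ∘ Fin.rev) p h_deg h_monic,
    Matrix.det_vandermonde]
  simp only [Function.comp_apply]
  exact prod_Ioi_rev (fun i j => x i - x j)

end
end

section
/- For n variables x = (x_1,...,x_n) and parameters a, the factorial complete homogeneous function satisfies h_m(x|a) = Σ over weakly increasing sequences 1 ≤ i_1 ≤ i_2 ≤ ... ≤ i_m ≤ n of the products (x_{i_1} + a_{i_1})·(x_{i_2} + a_{i_2+1})···(x_{i_m} + a_{i_m+m-1}). -/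
open PowerSeries Finset

noncomputable section

section Aux

variable {R : Type*} [CommRing R]

lemma geom_eq (x : R) : geom x = 1 + PowerSeries.C x * (PowerSeries.X * geom x) := by
  ext n
  cases n with
  | zero => simp [geom]
  | succ n =>
      simp [geom, PowerSeries.coeff_C_mul, PowerSeries.coeff_succ_X_mul, pow_succ,
        mul_comm]

lemma key_coeff (A : PowerSeries R) (x a : R) (m : ℕ) :
    PowerSeries.coeff (m + 1) (A * geom x * lin a) =
      PowerSeries.coeff (m + 1) A + (x + a) * PowerSeries.coeff m (A * geom x) := by
  have h1 : A * geom x = A + PowerSeries.C x * (PowerSeries.X * (A * geom x)) := by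
    conv_lhs => rw [geom_eq x]
    ring
  have h2 : A * geom x * lin a =
      A * geom x + PowerSeries.C a * (PowerSeries.X * (A * geom x)) := by
    rw [lin]; ring
  have hc : PowerSeries.coeff (m + 1) (A * geom x) =
      PowerSeries.coeff (m + 1) A + x * PowerSeries.coeff m (A * geom x) := by
    conv_lhs => rw [h1]
    simp [PowerSeries.coeff_C_mul, PowerSeries.coeff_succ_X_mul]
  rw [h2, map_add, hc, PowerSeries.coeff_C_mul, PowerSeries.coeff_succ_X_mul]
  ring

lemma coeff_prod_lin (b : ℕ → R) : ∀ N j, N < j →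
    PowerSeries.coeff j (∏ k ∈ Finset.range N, lin (b k)) = 0 := by
  intro N
  induction N with
  | zero =>
      intro j hj
      cases j with
      | zero => omega
      | succ j => simp
  | succ N ih =>
      intro j hj
      rw [Finset.prod_range_succ]
      have h2 : (∏ k ∈ Finset.range N, lin (b k)) * lin (b N) =
          (∏ k ∈ Finset.range N, lin (b k)) +
            PowerSeries.C (b N) *
              (PowerSeries.X * ∏ k ∈ Finset.range N, lin (b k)) := by
        rw [lin]; ring
      rw [h2, map_add, ih j (by omega)]
      cases j with
      | zero => omega
      | succ j =>
          rw [PowerSeries.coeff_C_mul, PowerSeries.coeff_succ_X_mul, ih j (by omega)]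
          ring

/-- The combinatorial sum. -/
def T (x a : ℕ → R) (n m : ℕ) : R :=
  ∑ f ∈ Finset.univ.filter (fun f : Fin m → Fin n => ∀ p q, p ≤ q → f p ≤ f q),
    ∏ j : Fin m, (x ((f j : ℕ) + 1) + a ((f j : ℕ) + 1 + (j : ℕ)))

lemma T_m_zero (x a : ℕ → R) (n : ℕ) : T x a n 0 = 1 := by
  rw [T]
  rw [Finset.filter_true_of_mem (fun f _ => by intro p q _; exact p.elim0)]
  simp

lemma T_n_zero (x a : ℕ → R) (m : ℕ) : T x a 0 (m + 1) = 0 := by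
  rw [T]
  haveI : IsEmpty (Fin (m + 1) → Fin 0) := ⟨fun f => (f 0).elim0⟩
  simp

lemma snoc_mono {n m : ℕ} (g : Fin m → Fin (n + 1)) (hg : ∀ p q : Fin m, p ≤ q → g p ≤ g q) :
    ∀ p q : Fin (m + 1), p ≤ q →
      (Fin.snoc g (Fin.last n) : Fin (m + 1) → Fin (n + 1)) p ≤
        (Fin.snoc g (Fin.last n) : Fin (m + 1) → Fin (n + 1)) q := by
  intro p q hpq
  induction q using Fin.lastCases with
  | last => rw [Fin.snoc_last]; exact Fin.le_last _
  | cast q' =>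
      induction p using Fin.lastCases with
      | last => exact absurd hpq (not_le.mpr (Fin.castSucc_lt_last q'))
      | cast p' =>
          rw [Fin.snoc_castSucc, Fin.snoc_castSucc]
          exact hg p' q' (Fin.castSucc_le_castSucc_iff.mp hpq)

lemma T_succ (x a : ℕ → R) (n m : ℕ) :
    T x a (n + 1) (m + 1) =
      T x a n (m + 1) + (x (n + 1) + a (n + 1 + m)) * T x a (n + 1) m := by
  classical
  set s₀ : Finset (Fin (m+1) → Fin (n+1)) :=
    Finset.univ.filter (fun f => ∀ p q, p ≤ q → f p ≤ f q) with hs₀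
  set p : (Fin (m+1) → Fin (n+1)) → Prop := fun f => f (Fin.last m) = Fin.last n with hp
  have hsplit := Finset.sum_filter_add_sum_filter_not s₀ p
    (fun f => ∏ j : Fin (m+1), (x ((f j : ℕ) + 1) + a ((f j : ℕ) + 1 + (j : ℕ))))
  rw [T, ← hsplit]
  have hA : ∑ f ∈ s₀.filter p,
      ∏ j : Fin (m+1), (x ((f j : ℕ) + 1) + a ((f j : ℕ) + 1 + (j : ℕ))) =
      (x (n + 1) + a (n + 1 + m)) * T x a (n + 1) m := by
    rw [T, Finset.mul_sum]
    refine Finset.sum_bij' (i := fun f _ => f ∘ Fin.castSucc)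
      (j := fun g _ => Fin.snoc g (Fin.last n)) ?_ ?_ ?_ ?_ ?_
    · intro f hf
      rw [Finset.mem_filter] at hf ⊢
      obtain ⟨hf₀, _⟩ := hf
      rw [hs₀, Finset.mem_filter] at hf₀
      exact ⟨Finset.mem_univ _, fun p q hpq =>
        hf₀.2 _ _ (Fin.castSucc_le_castSucc_iff.mpr hpq)⟩
    · intro g hg
      rw [Finset.mem_filter] at hg
      rw [Finset.mem_filter]
      refine ⟨?_, by simp [hp, Fin.snoc_last]⟩
      rw [hs₀, Finset.mem_filter]
      exact ⟨Finset.mem_univ _, snoc_mono g hg.2⟩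
    · intro f hf
      rw [Finset.mem_filter] at hf
      funext j
      induction j using Fin.lastCases with
      | last => simp only [Fin.snoc_last]; exact hf.2.symm
      | cast j' => simp [Fin.snoc_castSucc]
    · intro g hg
      funext j
      simp [Fin.snoc_castSucc]
    · intro f hf
      rw [Finset.mem_filter] at hf
      have hterm : (x ((f (Fin.last m) : ℕ) + 1) + a ((f (Fin.last m) : ℕ) + 1 + ((Fin.last m : Fin (m+1)) : ℕ)))
          = x (n + 1) + a (n + 1 + m) := by
        rw [hf.2]; simp [Fin.val_last]
      have hprod : ∏ j : Fin m,
            (x ((f j.castSucc : ℕ) + 1) + a ((f j.castSucc : ℕ) + 1 + ((j.castSucc : Fin (m+1)) : ℕ)))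
          = ∏ j : Fin m,
            (x (((f ∘ Fin.castSucc) j : ℕ) + 1) + a (((f ∘ Fin.castSucc) j : ℕ) + 1 + (j : ℕ))) := by
        exact Finset.prod_congr rfl (fun j _ => by simp [Fin.coe_castSucc])
      rw [Fin.prod_univ_castSucc, hterm, hprod]
      ring
  have hB : ∑ f ∈ s₀.filter (fun f => ¬ p f),
      ∏ j : Fin (m+1), (x ((f j : ℕ) + 1) + a ((f j : ℕ) + 1 + (j : ℕ))) =
      T x a n (m + 1) := by
    rw [T]
    have hval : ∀ f ∈ s₀.filter (fun f => ¬ p f), ∀ j : Fin (m+1), (f j : ℕ) < n := by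
      intro f hf j
      rw [Finset.mem_filter, hs₀, Finset.mem_filter] at hf
      have h1 : f j ≤ f (Fin.last m) := hf.1.2 _ _ (Fin.le_last j)
      have h2 : f (Fin.last m) < Fin.last n :=
        lt_of_le_of_ne (Fin.le_last _) hf.2
      have := lt_of_le_of_lt h1 h2
      simpa [Fin.lt_iff_val_lt_val, Fin.val_last] using this
    refine Finset.sum_bij' (i := fun f hf => fun j => (⟨(f j : ℕ), hval f hf j⟩ : Fin n))
      (j := fun g _ => fun j => (g j).castSucc) ?_ ?_ ?_ ?_ ?_
    · intro f hf
      rw [Finset.mem_filter]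
      refine ⟨Finset.mem_univ _, fun p q hpq => ?_⟩
      rw [Finset.mem_filter, hs₀, Finset.mem_filter] at hf
      exact Fin.mk_le_mk.mpr (hf.1.2 p q hpq)
    · intro g hg
      rw [Finset.mem_filter] at hg
      rw [Finset.mem_filter]
      constructor
      · rw [hs₀, Finset.mem_filter]
        exact ⟨Finset.mem_univ _, fun p q hpq =>
          Fin.castSucc_le_castSucc_iff.mpr (hg.2 p q hpq)⟩
      · exact fun h => absurd h (Fin.ne_of_lt (Fin.castSucc_lt_last _))
    · intro f hf
      funext j
      exact Fin.ext (by simp)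
    · intro g hg
      funext j
      exact Fin.ext (by simp)
    · intro f hf
      rfl
  rw [hA, hB]
  ring

end Aux

section Main

variable {R : Type*} [CommRing R]

lemma main_lemma (x a : ℕ → R) : ∀ n m : ℕ,
    PowerSeries.coeff m ((∏ i ∈ Finset.Icc 1 n, geom (x i)) *
        ∏ k ∈ Finset.range (m + n - 1), lin (a (k + 1))) = T x a n m := by
  intro n
  induction n with
  | zero =>
      intro m
      cases m with
      | zero => simp [T_m_zero]
      | succ m =>
          rw [T_n_zero]
          simp only [Finset.Icc_self, Nat.add_zero]
          rw [show Finset.Icc 1 0 = (∅ : Finset ℕ) by simp, Finset.prod_empty, one_mul]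
          exact coeff_prod_lin _ (m + 1 + 0 - 1) (m + 1) (by omega)
  | succ n ih =>
      intro m
      induction m with
      | zero =>
          rw [T_m_zero]
          simp only [PowerSeries.coeff_zero_eq_constantCoeff, map_mul, map_prod]
          have h1 : ∀ y : R, constantCoeff (geom y) = 1 := by
            intro y
            simp [geom, ← PowerSeries.coeff_zero_eq_constantCoeff]
          have h2 : ∀ y : R, constantCoeff (lin y) = 1 := by
            intro y; simp [lin]
          simp [h1, h2]
      | succ m ihm =>
          have harr : (∏ i ∈ Finset.Icc 1 (n+1), geom (x i)) *
              ∏ k ∈ Finset.range (m + 1 + (n + 1) - 1), lin (a (k + 1)) =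
              ((∏ i ∈ Finset.Icc 1 n, geom (x i)) *
                ∏ k ∈ Finset.range (m + n), lin (a (k + 1))) *
                geom (x (n+1)) * lin (a (m + n + 1)) := by
            rw [show m + 1 + (n + 1) - 1 = m + n + 1 by omega,
              Finset.prod_range_succ,
              show Finset.Icc 1 (n+1) = insert (n+1) (Finset.Icc 1 n) by
                ext k; simp [Finset.mem_Icc]; omega,
              Finset.prod_insert (by simp)]
            ring
          rw [harr, key_coeff]
          have e1 : (∏ i ∈ Finset.Icc 1 n, geom (x i)) *
              (∏ k ∈ Finset.range (m + n), lin (a (k + 1))) =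
              (∏ i ∈ Finset.Icc 1 n, geom (x i)) *
              ∏ k ∈ Finset.range (m + 1 + n - 1), lin (a (k + 1)) := by
            rw [show m + 1 + n - 1 = m + n by omega]
          have e2 : (∏ i ∈ Finset.Icc 1 n, geom (x i)) *
              (∏ k ∈ Finset.range (m + n), lin (a (k + 1))) * geom (x (n+1)) =
              (∏ i ∈ Finset.Icc 1 (n+1), geom (x i)) *
              ∏ k ∈ Finset.range (m + (n + 1) - 1), lin (a (k + 1)) := by
            rw [show m + (n + 1) - 1 = m + n by omega,
              show Finset.Icc 1 (n+1) = insert (n+1) (Finset.Icc 1 n) by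
                ext k; simp [Finset.mem_Icc]; omega,
              Finset.prod_insert (by simp)]
            ring
          rw [e2, ihm, e1, ih (m + 1), T_succ]
          ring_nf

end Main

/-- hₘ(x|a) = Σ over weakly increasing 1 ≤ i₁ ≤ … ≤ i_m ≤ n of
(x_{i₁}+a_{i₁})(x_{i₂}+a_{i₂+1})···(x_{i_m}+a_{i_m+m-1}). -/
theorem stmt8 {R : Type*} [CommRing R] (n m : ℕ) (hn : 1 ≤ n) (x a : ℕ → R) :
    PowerSeries.coeff m ((∏ i ∈ Finset.Icc 1 n, geom (x i)) *
        ∏ k ∈ Finset.range (m + n - 1), lin (a (k + 1))) =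
      ∑ f ∈ Finset.univ.filter (fun f : Fin m → Fin n => ∀ p q, p ≤ q → f p ≤ f q),
        ∏ j : Fin m, (x ((f j : ℕ) + 1) + a ((f j : ℕ) + 1 + (j : ℕ))) := by
  exact main_lemma x a n m
end
end

section
/- Flagged factorial Jacobi–Trudi identity for factorial symplectic characters: with h^{sp}_m as in the definition below, det(x_i(x_i|a)^{λ_j+n-j} − x̄_i(x̄_i|a)^{λ_j+n-j})_{1≤i,j≤n} = ∏_{i=1}^n (x_i − x̄_i) · ∏_{1≤i<j≤n}(x_i − x_j)(1 − x̄_i x̄_j) · det(h^{sp}_{λ_j−j+i}(x^{(i)}, x̄^{(i)}|a))_{1≤i,j≤n}. -/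
open PowerSeries Finset

noncomputable section

/-- Flagged factorial complete function h_m(x_p,…,x_q | a), zero for m < 0. -/
def hfun {R : Type*} [CommRing R] (x a : ℕ → R) (p q : ℕ) (m : ℤ) : R :=
  if m < 0 then 0 else
    PowerSeries.coeff m.toNat ((∏ ℓ ∈ Finset.Icc p q, geom (x ℓ)) *
      ∏ k ∈ Finset.range (m.toNat + q - p), lin (a (k + 1)))

/-- Symplectic flagged factorial complete function h^{sp}_m(x_p,x̄_p,…,x_q,x̄_q | a). -/
def hsp {R : Type*} [CommRing R] (x xb a : ℕ → R) (p q : ℕ) (m : ℤ) : R :=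
  if m < 0 then 0 else
    PowerSeries.coeff m.toNat ((∏ ℓ ∈ Finset.Icc p q, geom (x ℓ) * geom (xb ℓ)) *
      ∏ k ∈ Finset.range (m.toNat + q - p), lin (a (k + 1)))

namespace JT

variable {R : Type*} [CommRing R]

lemma coeff_geom (x : R) (n : ℕ) : coeff n (geom x) = x ^ n := coeff_mk _ _

lemma coeff_mul_lin (f : PowerSeries R) (c : R) (n : ℕ) :
    coeff (n + 1) (f * lin c) = coeff (n + 1) f + c * coeff n f := by
  have h : f * lin c = f + C c * (f * X) := by rw [lin]; ring
  rw [h, map_add, coeff_C_mul, coeff_succ_mul_X]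

/-- truncated product of lin factors -/
def L (a : ℕ → R) (m : ℕ) : PowerSeries R := ∏ k ∈ Finset.range m, lin (a (k + 1))

lemma coeff_geom_mul_L (x : R) (a : ℕ → R) (m : ℕ) : ∀ s : ℕ,
    coeff (m + s) (geom x * L a m) = x ^ s * factPow x a m := by
  induction m with
  | zero => intro s; simp [L, factPow, coeff_geom]
  | succ m ih =>
    intro s
    have hL : L a (m + 1) = L a m * lin (a (m + 1)) := Finset.prod_range_succ _ _
    have h1 : m + 1 + s = (m + s) + 1 := by omega
    rw [hL, ← mul_assoc, h1, coeff_mul_lin, ← h1]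
    have h2 : m + 1 + s = m + (s + 1) := by omega
    rw [h2, ih (s + 1), ih s]
    simp only [factPow, Finset.prod_range_succ]
    ring

lemma telescope (x y : R) :
    (C x - C y) * (geom x * geom y) = C x * geom x - C y * geom y := by
  ext n
  rw [sub_mul, map_sub, map_sub, coeff_C_mul, coeff_C_mul, coeff_C_mul, coeff_C_mul,
    coeff_geom, coeff_geom, coeff_mul, Finset.Nat.sum_antidiagonal_eq_sum_range_succ_mk]
  simp only [coeff_geom]
  have key : (x - y) * ∑ k ∈ range (n + 1), x ^ k * y ^ (n - k)
      = x ^ (n + 1) - y ^ (n + 1) := by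
    calc (x - y) * ∑ k ∈ range (n + 1), x ^ k * y ^ (n - k)
        = ∑ k ∈ range (n + 1),
            (x ^ (k+1) * y ^ (n + 1 - (k+1)) - x ^ k * y ^ (n + 1 - k)) := by
          rw [Finset.mul_sum]
          apply Finset.sum_congr rfl
          intro k hk
          have hk' : k ≤ n := Nat.lt_succ_iff.mp (Finset.mem_range.mp hk)
          have e1 : n + 1 - (k + 1) = n - k := by omega
          have e2 : n + 1 - k = (n - k) + 1 := by omega
          rw [e1, e2, pow_succ, pow_succ]
          ring
      _ = x ^ (n+1) * y ^ (n + 1 - (n+1)) - x ^ 0 * y ^ (n + 1 - 0) :=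
          Finset.sum_range_sub (fun p => x ^ p * y ^ (n + 1 - p)) (n + 1)
      _ = x ^ (n + 1) - y ^ (n + 1) := by simp
  calc x * ∑ k ∈ range (n + 1), x ^ k * y ^ (n - k)
        - y * ∑ k ∈ range (n + 1), x ^ k * y ^ (n - k)
      = (x - y) * ∑ k ∈ range (n + 1), x ^ k * y ^ (n - k) := by ring
    _ = x ^ (n + 1) - y ^ (n + 1) := key
    _ = x * x ^ n - y * y ^ n := by rw [pow_succ, pow_succ]; ring

lemma onePair (x y : R) (a : ℕ → R) (m : ℕ) :
    x * factPow x a m - y * factPow y a m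
      = (x - y) * coeff m (geom x * geom y * L a m) := by
  have h1 : (C x - C y) * (geom x * geom y * L a m)
      = C x * (geom x * L a m) - C y * (geom y * L a m) := by
    calc (C x - C y) * (geom x * geom y * L a m)
        = ((C x - C y) * (geom x * geom y)) * L a m := by ring
      _ = (C x * geom x - C y * geom y) * L a m := by rw [telescope]
      _ = C x * (geom x * L a m) - C y * (geom y * L a m) := by ring
  have h2 : coeff m ((C x - C y) * (geom x * geom y * L a m))
      = (x - y) * coeff m (geom x * geom y * L a m) := by
    rw [sub_mul, map_sub, coeff_C_mul, coeff_C_mul]; ring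
  have h3 := congrArg (coeff m) h1
  rw [h2, map_sub, coeff_C_mul, coeff_C_mul] at h3
  have g1 := coeff_geom_mul_L x a m 0
  have g2 := coeff_geom_mul_L y a m 0
  rw [Nat.add_zero] at g1 g2
  rw [g1, g2] at h3
  simp only [pow_zero, one_mul] at h3
  linear_combination -h3

lemma geom_inv (x : R) : (1 - C x * X) * geom x = 1 := by
  ext n
  cases n with
  | zero => simp [geom, sub_mul, coeff_C_mul, mul_comm (C x) X]
  | succ n =>
    rw [sub_mul, map_sub, one_mul]
    have h : C x * X * geom x = C x * (geom x * X) := by ring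
    rw [h, coeff_C_mul, coeff_succ_mul_X, coeff_geom, coeff_geom]
    simp [pow_succ, mul_comm]

lemma QGG (x y : R) (h : x * y = 1) :
    ((1 : PowerSeries R) - C (x + y) * X + X ^ 2) * (geom x * geom y) = 1 := by
  have hq : (1 : PowerSeries R) - C (x + y) * X + X ^ 2
      = (1 - C x * X) * (1 - C y * X) := by
    have h1 : (C x) * (C y) = 1 := by rw [← map_mul, h, map_one]
    calc (1 : PowerSeries R) - C (x + y) * X + X ^ 2
        = 1 - (C x + C y) * X + (C x * C y) * X ^ 2 := by rw [map_add, h1]; ring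
      _ = (1 - C x * X) * (1 - C y * X) := by ring
  calc ((1 : PowerSeries R) - C (x + y) * X + X ^ 2) * (geom x * geom y)
      = ((1 - C x * X) * geom x) * ((1 - C y * X) * geom y) := by rw [hq]; ring
    _ = 1 := by rw [geom_inv, geom_inv, one_mul]

/-- quadratic factor -/
def Q (y : ℕ → R) (r : ℕ) : PowerSeries R := 1 - C (y r) * X + X ^ 2

lemma QQexp (y : ℕ → R) (p : ℕ) : ∀ n, p ≤ n →
    (∏ r ∈ Ioc p n, Q y r) =
      ∑ k ∈ Icc p n, C (∏ ℓ ∈ Ioc k n, (y p - y ℓ)) * X ^ (n - k) * ∏ r ∈ Ico p k, Q y r := by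
  intro n
  induction n with
  | zero =>
    intro hp
    interval_cases p
    simp
  | succ n ih =>
    intro hp
    rcases Nat.lt_or_ge p (n + 1) with hlt | hge
    · have hpn : p ≤ n := by omega
      have hins : Icc p (n + 1) = insert (n + 1) (Icc p n) :=
        (Finset.insert_Icc_right_eq_Icc_add_one hp).symm
      rw [hins, Finset.sum_insert (by simp)]
      have hterm : C (∏ ℓ ∈ Ioc (n+1) (n+1), (y p - y ℓ)) * X ^ (n + 1 - (n+1))
          * ∏ r ∈ Ico p (n+1), Q y r = ∏ r ∈ Ico p (n+1), Q y r := by simp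
      rw [hterm]
      have hsum : (∑ k ∈ Icc p n, C (∏ ℓ ∈ Ioc k (n+1), (y p - y ℓ)) * X ^ (n + 1 - k)
            * ∏ r ∈ Ico p k, Q y r)
          = (C (y p) - C (y (n+1))) * X * ∏ r ∈ Ioc p n, Q y r := by
        rw [ih hpn, Finset.mul_sum]
        apply Finset.sum_congr rfl
        intro k hk
        have hk' : p ≤ k ∧ k ≤ n := by simpa using hk
        rw [Finset.prod_Ioc_succ_top hk'.2, map_mul, map_sub]
        have hx : (X : PowerSeries R) ^ (n + 1 - k) = X ^ (n - k) * X := by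
          rw [← pow_succ]
          congr 1
          omega
        rw [hx]
        ring
      rw [hsum]
      have hIco : ∏ r ∈ Ico p (n+1), Q y r = Q y p * ∏ r ∈ Ioc p n, Q y r := by
        rw [Finset.Ico_add_one_right_eq_Icc, ← Finset.Ioc_insert_left hpn,
          Finset.prod_insert Finset.left_notMem_Ioc]
      rw [hIco, Finset.prod_Ioc_succ_top hpn]
      simp only [Q]
      ring
    · have hpe : p = n + 1 := by omega
      subst hpe
      simp

lemma starAux (y : ℕ → R) (GG : ℕ → PowerSeries R) (hQG : ∀ r, Q y r * GG r = 1)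
    (p n : ℕ) (hpn : p ≤ n) :
    GG p = ∑ k ∈ Icc p n, C (∏ ℓ ∈ Ioc k n, (y p - y ℓ)) *
        (X ^ (n - k) * ∏ r ∈ Icc k n, GG r) := by
  have hq := congrArg (· * ∏ r ∈ Icc p n, GG r) (QQexp y p n hpn)
  have hGsplit : ∏ r ∈ Icc p n, GG r = GG p * ∏ r ∈ Ioc p n, GG r := by
    rw [← Finset.Ioc_insert_left hpn, Finset.prod_insert Finset.left_notMem_Ioc]
  have hL : (∏ r ∈ Ioc p n, Q y r) * ∏ r ∈ Icc p n, GG r = GG p := by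
    rw [hGsplit]
    calc (∏ r ∈ Ioc p n, Q y r) * (GG p * ∏ r ∈ Ioc p n, GG r)
        = GG p * ((∏ r ∈ Ioc p n, Q y r) * ∏ r ∈ Ioc p n, GG r) := by ring
      _ = GG p * ∏ r ∈ Ioc p n, (Q y r * GG r) := by rw [← Finset.prod_mul_distrib]
      _ = GG p := by simp [hQG]
  rw [hL] at hq
  rw [hq, Finset.sum_mul]
  apply Finset.sum_congr rfl
  intro k hk
  have hk' : p ≤ k ∧ k ≤ n := by simpa using hk
  have hGsplit2 : ∏ r ∈ Icc p n, GG r = (∏ r ∈ Ico p k, GG r) * ∏ r ∈ Icc k n, GG r := by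
    rw [← Finset.Ico_add_one_right_eq_Icc, ← Finset.Ico_add_one_right_eq_Icc,
      Finset.prod_Ico_consecutive _ hk'.1 (by omega)]
  rw [hGsplit2]
  calc C (∏ ℓ ∈ Ioc k n, (y p - y ℓ)) * X ^ (n - k) * (∏ r ∈ Ico p k, Q y r)
        * ((∏ r ∈ Ico p k, GG r) * ∏ r ∈ Icc k n, GG r)
      = C (∏ ℓ ∈ Ioc k n, (y p - y ℓ)) * (X ^ (n - k) * ∏ r ∈ Icc k n, GG r)
        * ((∏ r ∈ Ico p k, Q y r) * ∏ r ∈ Ico p k, GG r) := by ring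
    _ = C (∏ ℓ ∈ Ioc k n, (y p - y ℓ)) * (X ^ (n - k) * ∏ r ∈ Icc k n, GG r)
        * ∏ r ∈ Ico p k, (Q y r * GG r) := by rw [← Finset.prod_mul_distrib]
    _ = C (∏ ℓ ∈ Ioc k n, (y p - y ℓ)) * (X ^ (n - k) * ∏ r ∈ Icc k n, GG r) := by
        simp [hQG]

lemma star (x xb : ℕ → R) (hinv : ∀ ℓ, x ℓ * xb ℓ = 1) (p n : ℕ) (hpn : p ≤ n) :
    geom (x p) * geom (xb p) =
      ∑ k ∈ Icc p n, C (∏ ℓ ∈ Ioc k n, ((x p + xb p) - (x ℓ + xb ℓ))) *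
        (X ^ (n - k) * ∏ r ∈ Icc k n, (geom (x r) * geom (xb r))) :=
  starAux (fun r => x r + xb r) (fun r => geom (x r) * geom (xb r))
    (fun r => QGG (x r) (xb r) (hinv r)) p n hpn

lemma entryAux (n : ℕ) (x xb a : ℕ → R) (hinv : ∀ ℓ, x ℓ * xb ℓ = 1)
    (p jj c : ℕ) (hp1 : 1 ≤ p) (hpn : p ≤ n) (hjn : jj < n) :
    x p * factPow (x p) a (c + (n - 1 - jj)) - xb p * factPow (xb p) a (c + (n - 1 - jj))
      = ∑ q ∈ Icc p n,
          ((x p - xb p) * ∏ ℓ ∈ Ioc q n, ((x p + xb p) - (x ℓ + xb ℓ))) *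
            hsp x xb a q n ((c : ℤ) - (jj + 1) + q) := by
  rw [onePair]
  have hs := congrArg (fun f => coeff (c + (n - 1 - jj)) (f * L a (c + (n - 1 - jj))))
    (star x xb hinv p n hpn)
  rw [hs, Finset.sum_mul, map_sum, Finset.mul_sum]
  apply Finset.sum_congr rfl
  intro q hq
  have hq' : p ≤ q ∧ q ≤ n := by simpa using hq
  have hterm : C (∏ ℓ ∈ Ioc q n, ((x p + xb p) - (x ℓ + xb ℓ))) *
        (X ^ (n - q) * ∏ r ∈ Icc q n, (geom (x r) * geom (xb r))) * L a (c + (n - 1 - jj))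
      = C (∏ ℓ ∈ Ioc q n, ((x p + xb p) - (x ℓ + xb ℓ))) *
        (X ^ (n - q) *
          ((∏ r ∈ Icc q n, (geom (x r) * geom (xb r))) * L a (c + (n - 1 - jj)))) := by ring
  rw [hterm, coeff_C_mul, coeff_X_pow_mul']
  rw [hsp]
  split_ifs with h1 h2 h2
  · exfalso; omega
  · have e1 : ((c : ℤ) - (jj + 1) + q).toNat = c + (n - 1 - jj) - (n - q) := by omega
    rw [e1]
    have e2 : c + (n - 1 - jj) - (n - q) + n - q = c + (n - 1 - jj) := by omega
    rw [e2]
    simp only [L]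
    ring
  · ring
  · exfalso; omega

lemma sumIccFin {M : Type*} [AddCommMonoid M] (n : ℕ) (i : Fin n) (F : ℕ → M) (G : Fin n → M)
    (hFG : ∀ k : Fin n, (i : ℕ) ≤ (k : ℕ) → F ((k : ℕ) + 1) = G k) :
    ∑ q ∈ Icc ((i : ℕ) + 1) n, F q = ∑ k : Fin n, if (i : ℕ) ≤ (k : ℕ) then G k else 0 := by
  rw [← Finset.sum_filter]
  refine Finset.sum_bij' (fun q hq => (⟨q - 1, by simp only [Finset.mem_Icc] at hq; omega⟩ : Fin n))
    (fun (k : Fin n) _ => (k : ℕ) + 1) ?_ ?_ ?_ ?_ ?_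
  · intro q hq; simp only [Finset.mem_Icc] at hq
    simp only [Finset.mem_filter, Finset.mem_univ, true_and]
    show (i : ℕ) ≤ q - 1
    omega
  · intro k hk; simp only [Finset.mem_filter, Finset.mem_univ, true_and] at hk
    simp only [Finset.mem_Icc]; exact ⟨by omega, by omega⟩
  · intro q hq; simp only [Finset.mem_Icc] at hq
    show q - 1 + 1 = q
    omega
  · intro k _; ext; show (((k : ℕ) + 1) - 1) = (k : ℕ); omega
  · intro q hq; simp only [Finset.mem_Icc] at hq
    rw [← hFG ⟨q - 1, by omega⟩ (by show (i : ℕ) ≤ q - 1; omega)]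
    show F q = F ((q - 1) + 1)
    congr 1
    omega

lemma prodIoiFin (n : ℕ) (i : Fin n) (F : ℕ → R) (G : Fin n → R)
    (hFG : ∀ k : Fin n, (i : ℕ) < (k : ℕ) → F ((k : ℕ) + 1) = G k) :
    ∏ q ∈ Ioc ((i : ℕ) + 1) n, F q = ∏ k ∈ Ioi i, G k := by
  refine Finset.prod_bij' (fun q hq => (⟨q - 1, by simp only [Finset.mem_Ioc] at hq; omega⟩ : Fin n))
    (fun (k : Fin n) _ => (k : ℕ) + 1) ?_ ?_ ?_ ?_ ?_
  · intro q hq; simp only [Finset.mem_Ioc] at hq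
    simp only [Finset.mem_Ioi, Fin.lt_def]
    show (i : ℕ) < q - 1
    omega
  · intro k hk; simp only [Finset.mem_Ioi, Fin.lt_def] at hk
    simp only [Finset.mem_Ioc]; exact ⟨by omega, by omega⟩
  · intro q hq; simp only [Finset.mem_Ioc] at hq
    show q - 1 + 1 = q
    omega
  · intro k _; ext; show (((k : ℕ) + 1) - 1) = (k : ℕ); omega
  · intro q hq; simp only [Finset.mem_Ioc] at hq
    rw [← hFG ⟨q - 1, by omega⟩ (by show (i : ℕ) < q - 1; omega)]
    show F q = F ((q - 1) + 1)
    congr 1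
    omega

lemma entry (n : ℕ) (x xb a : ℕ → R) (hinv : ∀ ℓ, x ℓ * xb ℓ = 1)
    (i j : Fin n) (c : ℕ) :
    x ((i : ℕ) + 1) * factPow (x ((i : ℕ) + 1)) a (c + (n - 1 - (j : ℕ)))
      - xb ((i : ℕ) + 1) * factPow (xb ((i : ℕ) + 1)) a (c + (n - 1 - (j : ℕ)))
    = ∑ k : Fin n,
        (if (i : ℕ) ≤ (k : ℕ) then
            (x ((i : ℕ) + 1) - xb ((i : ℕ) + 1)) *
              ∏ ℓ ∈ Ioc ((k : ℕ) + 1) n,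
                ((x ((i : ℕ) + 1) + xb ((i : ℕ) + 1)) - (x ℓ + xb ℓ))
          else 0) *
          hsp x xb a ((k : ℕ) + 1) n ((c : ℤ) - ((j : ℕ) + 1) + ((k : ℕ) + 1)) := by
  rw [entryAux n x xb a hinv ((i : ℕ) + 1) (j : ℕ) c (by omega) i.isLt j.isLt]
  rw [sumIccFin n i _ (fun k : Fin n =>
      ((x ((i : ℕ) + 1) - xb ((i : ℕ) + 1)) *
        ∏ ℓ ∈ Ioc ((k : ℕ) + 1) n, ((x ((i : ℕ) + 1) + xb ((i : ℕ) + 1)) - (x ℓ + xb ℓ))) *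
        hsp x xb a ((k : ℕ) + 1) n ((c : ℤ) - ((j : ℕ) + 1) + ((k : ℕ) + 1)))
    (fun k hk => by norm_cast)]
  apply Finset.sum_congr rfl
  intro k _
  rw [ite_mul, zero_mul]

end JT

/-- Flagged factorial Jacobi–Trudi identity for factorial symplectic characters. -/
theorem stmt13 {R : Type*} [CommRing R] (n : ℕ) (x xb a : ℕ → R)
    (hinv : ∀ ℓ, x ℓ * xb ℓ = 1) (lam : ℕ → ℕ) (hlam : ∀ j, lam (j + 1) ≤ lam j) :
    Matrix.det (Matrix.of fun i j : Fin n =>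
        x ((i : ℕ) + 1) * factPow (x ((i : ℕ) + 1)) a (lam ((j : ℕ) + 1) + (n - 1 - (j : ℕ)))
        - xb ((i : ℕ) + 1) *
            factPow (xb ((i : ℕ) + 1)) a (lam ((j : ℕ) + 1) + (n - 1 - (j : ℕ)))) =
    (∏ i : Fin n, (x ((i : ℕ) + 1) - xb ((i : ℕ) + 1))) *
    (∏ i : Fin n, ∏ j ∈ Finset.Ioi i,
        (x ((i : ℕ) + 1) - x ((j : ℕ) + 1)) * (1 - xb ((i : ℕ) + 1) * xb ((j : ℕ) + 1))) *
    Matrix.det (Matrix.of fun i j : Fin n =>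
        hsp x xb a ((i : ℕ) + 1) n
          ((lam ((j : ℕ) + 1) : ℤ) - ((j : ℕ) + 1) + ((i : ℕ) + 1))) := by
  classical
  set B : Matrix (Fin n) (Fin n) R := Matrix.of fun i k =>
    if (i : ℕ) ≤ (k : ℕ) then
      (x ((i : ℕ) + 1) - xb ((i : ℕ) + 1)) *
        ∏ ℓ ∈ Finset.Ioc ((k : ℕ) + 1) n,
          ((x ((i : ℕ) + 1) + xb ((i : ℕ) + 1)) - (x ℓ + xb ℓ))
    else 0 with hB
  set H : Matrix (Fin n) (Fin n) R := Matrix.of fun k j : Fin n =>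
    hsp x xb a ((k : ℕ) + 1) n
      ((lam ((j : ℕ) + 1) : ℤ) - ((j : ℕ) + 1) + ((k : ℕ) + 1)) with hH
  have hMH : (Matrix.of fun i j : Fin n =>
      x ((i : ℕ) + 1) * factPow (x ((i : ℕ) + 1)) a (lam ((j : ℕ) + 1) + (n - 1 - (j : ℕ)))
      - xb ((i : ℕ) + 1) *
          factPow (xb ((i : ℕ) + 1)) a (lam ((j : ℕ) + 1) + (n - 1 - (j : ℕ)))) = B * H := by
    ext i j
    rw [Matrix.mul_apply]
    simpa [hB, hH] using JT.entry n x xb a hinv i j (lam ((j : ℕ) + 1))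
  rw [hMH, Matrix.det_mul]
  have hBtri : B.BlockTriangular id := by
    intro i k hik
    simp only [hB, Matrix.of_apply]
    rw [if_neg]
    exact fun h => absurd (Fin.le_def.mpr h) (not_le.mpr hik)
  rw [Matrix.det_of_upperTriangular hBtri]
  have hdiag : (∏ i : Fin n, B i i)
      = (∏ i : Fin n, (x ((i : ℕ) + 1) - xb ((i : ℕ) + 1))) *
        ∏ i : Fin n, ∏ j ∈ Finset.Ioi i,
          (x ((i : ℕ) + 1) - x ((j : ℕ) + 1)) * (1 - xb ((i : ℕ) + 1) * xb ((j : ℕ) + 1)) := by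
    rw [← Finset.prod_mul_distrib]
    apply Finset.prod_congr rfl
    intro i _
    simp only [hB, Matrix.of_apply, if_pos le_rfl]
    congr 1
    refine JT.prodIoiFin n i _ _ ?_
    intro k hk
    have h1 : x ((i : ℕ) + 1) * xb ((i : ℕ) + 1) = 1 := hinv _
    have h2 : x ((k : ℕ) + 1) * xb ((k : ℕ) + 1) = 1 := hinv _
    linear_combination xb ((k : ℕ) + 1) * h1 - xb ((i : ℕ) + 1) * h2
  rw [hdiag, mul_assoc]
end
end

section
/- Factorial Tokuyama-type factorization (Schur case, determinantal form): for λ = μ + δ with δ = (n, n−1, ..., 1) and μ a partition of length ≤ n, the determinant det((x_i + y_i)·q_{λ_j − 1}(x^{(i)}; y^{(i+1)} | a))_{1≤i,j≤n} equals ∏_{1≤i≤j≤n}(x_i + y_j) · det(h_{μ_j − j + i}(x^{(i)} | a))_{1≤i,j≤n}, where q_m(x^{(d)}; y^{(d+1)} | a) is the coefficient of t^m in [∏_{j=d+1}^n (1+t y_j) · ∏_{k=1}^m (1+t a_k)] / ∏_{i=d}^n (1-t x_i), and h_m(x^{(i)}|a) is the coefficient of t^m in ∏_{ℓ=i}^n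 1/(1-t x_ℓ) · ∏_{k=1}^{m+n-i}(1+t a_k). -/
open PowerSeries Finset

noncomputable section

section TokuyamaAux

variable {R : Type*} [CommRing R]

lemma coeff_geom (x : R) (d : ℕ) : coeff d (geom x) = x ^ d := coeff_mk _ _

/-- truncation as a power series -/
def truncPS (m : ℕ) (F : PowerSeries R) : PowerSeries R :=
  PowerSeries.mk fun d => if d < m then coeff d F else 0

lemma coeff_truncPS (m : ℕ) (F : PowerSeries R) (d : ℕ) :
    coeff d (truncPS m F) = if d < m then coeff d F else 0 := coeff_mk _ _

lemma truncPS_zero (F : PowerSeries R) : truncPS 0 F = 0 := by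
  ext d; simp [coeff_truncPS]

lemma coeff_mul_onesub (F : PowerSeries R) (x : R) (d : ℕ) :
    coeff d (F * (1 - C x * X)) =
      coeff d F - x * (if d = 0 then 0 else coeff (d - 1) F) := by
  have : F * (1 - C x * X) = F - (F * C x) * X := by ring
  rw [this, map_sub]
  cases d with
  | zero => simp
  | succ d => simp [coeff_succ_mul_X, coeff_mul_C, mul_comm]

lemma geom_mul_onesub (x : R) : geom x * (1 - C x * X) = 1 := by
  ext d
  rw [coeff_mul_onesub]
  cases d with
  | zero => simp [coeff_geom]
  | succ d => simp [coeff_geom, pow_succ, mul_comm]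

lemma coeff_lin_mul (a : R) (F : PowerSeries R) (d : ℕ) :
    coeff d (lin a * F) = coeff d F + a * (if d = 0 then 0 else coeff (d - 1) F) := by
  have : lin a * F = F + (F * C a) * X := by rw [lin]; ring
  rw [this, map_add]
  cases d with
  | zero => simp
  | succ d => simp [coeff_succ_mul_X, coeff_mul_C, mul_comm]

lemma truncPS_step (B : PowerSeries R) (x : R) (m : ℕ) :
    truncPS (m + 1) (B * (1 - C x * X)) =
      truncPS m B * (1 - C x * X) + C (coeff m B) * X ^ m := by
  ext d
  rw [map_add, coeff_truncPS, coeff_mul_onesub, coeff_mul_onesub, coeff_truncPS,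
    coeff_truncPS, PowerSeries.coeff_C_mul, PowerSeries.coeff_X_pow]
  split_ifs <;> first | (exfalso; omega) | (subst_vars; ring)

lemma step4 (B : PowerSeries R) (x : R) (m : ℕ) :
    truncPS (m + 1) (B * (1 - C x * X)) * geom x =
      truncPS m B + C (coeff m B) * X ^ m * geom x := by
  rw [truncPS_step, add_mul, mul_assoc (truncPS m B)]
  rw [show (1 - C x * X) * geom x = 1 from by rw [mul_comm]; exact geom_mul_onesub x]
  rw [mul_one]

lemma Icc_bot_insert {a b : ℕ} (h : a ≤ b) :
    Finset.Icc a b = insert a (Finset.Icc (a + 1) b) := by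
  ext k; simp only [Finset.mem_Icc, Finset.mem_insert]; omega

lemma tele (x : ℕ → R) (Lp : PowerSeries R) (i n : ℕ) (hi : 1 ≤ i) :
    ∀ t, i + t ≤ n + 1 →
    truncPS t (Lp * ∏ ℓ ∈ Icc i (n - t), geom (x ℓ)) * ∏ ℓ ∈ Icc (n + 1 - t) n, geom (x ℓ)
      = ∑ k ∈ Icc (n + 1 - t) n,
          C (coeff (n - k) (Lp * ∏ ℓ ∈ Icc i k, geom (x ℓ))) * X ^ (n - k) *
            ∏ ℓ ∈ Icc k n, geom (x ℓ) := by
  intro t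
  induction t with
  | zero =>
    intro _
    have he : Finset.Icc (n + 1 - 0) n = (∅ : Finset ℕ) := Finset.Icc_eq_empty (by omega)
    rw [truncPS_zero, zero_mul, he, Finset.sum_empty]
  | succ t ih =>
    intro h
    have e1 : n + 1 - (t + 1) = n - t := by omega
    have e2 : n - (t + 1) = n - t - 1 := by omega
    rw [e1, e2]
    have hsplitP : (∏ ℓ ∈ Icc i (n - t), geom (x ℓ)) =
        (∏ ℓ ∈ Icc i (n - t - 1), geom (x ℓ)) * geom (x (n - t)) := by
      have h2 := Finset.prod_Icc_succ_top (f := fun ℓ => geom (x ℓ))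
        (show i ≤ (n - t - 1) + 1 by omega)
      rw [show n - t - 1 + 1 = n - t from by omega] at h2
      exact h2
    have hB : Lp * ∏ ℓ ∈ Icc i (n - t - 1), geom (x ℓ) =
        (Lp * ∏ ℓ ∈ Icc i (n - t), geom (x ℓ)) * (1 - C (x (n - t)) * X) := by
      rw [hsplitP, mul_assoc, mul_assoc, geom_mul_onesub, mul_one]
    have hsplitQ : (∏ ℓ ∈ Icc (n - t) n, geom (x ℓ)) =
        geom (x (n - t)) * ∏ ℓ ∈ Icc (n - t + 1) n, geom (x ℓ) := by
      rw [Icc_bot_insert (show n - t ≤ n by omega), Finset.prod_insert (by simp)]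
    rw [hB, hsplitQ, ← mul_assoc, step4]
    have ih' := ih (by omega)
    rw [show n + 1 - t = n - t + 1 from by omega] at ih'
    rw [add_mul, ih']
    rw [Icc_bot_insert (show n - t ≤ n by omega), Finset.sum_insert (by simp),
      show n - (n - t) = t from by omega, hsplitQ]
    ring

lemma coeff_prod_lin_s19 (y : ℕ → R) (s : Finset ℕ) :
    ∀ d, s.card < d → coeff d (∏ p ∈ s, lin (y p)) = 0 := by
  induction s using Finset.cons_induction with
  | empty => intro d hd; simp [PowerSeries.coeff_one]; omega
  | cons a s ha ih =>
    intro d hd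
    rw [Finset.prod_cons, coeff_lin_mul]
    rw [Finset.card_cons] at hd
    rw [ih d (by omega), if_neg (by omega), ih (d - 1) (by omega)]
    ring

lemma truncPS_prod_lin (y : ℕ → R) (s : Finset ℕ) (m : ℕ) (hm : s.card < m) :
    truncPS m (∏ p ∈ s, lin (y p)) = ∏ p ∈ s, lin (y p) := by
  ext d
  rw [coeff_truncPS]
  split_ifs with h
  · rfl
  · rw [coeff_prod_lin_s19 y s d (by omega)]

lemma master (x y : ℕ → R) (n i : ℕ) (h1 : 1 ≤ i) (h2 : i ≤ n) :
    (∏ p ∈ Icc (i + 1) n, lin (y p)) * ∏ ℓ ∈ Icc i n, geom (x ℓ)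
      = ∑ k ∈ Icc i n,
          C (coeff (n - k) ((∏ p ∈ Icc (i + 1) n, lin (y p)) * ∏ ℓ ∈ Icc i k, geom (x ℓ))) *
            X ^ (n - k) * ∏ ℓ ∈ Icc k n, geom (x ℓ) := by
  have h := tele x (∏ p ∈ Icc (i + 1) n, lin (y p)) i n h1 (n + 1 - i) (by omega)
  rw [show n + 1 - (n + 1 - i) = i from by omega, show n - (n + 1 - i) = i - 1 from by omega] at h
  rw [Finset.Icc_eq_empty (show ¬ i ≤ i - 1 by omega), Finset.prod_empty, mul_one] at h
  rw [truncPS_prod_lin y _ _ (by rw [Nat.card_Icc]; omega)] at h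
  exact h

lemma coeff_prod_lin_mul_geom (y : ℕ → R) (x : R) (s : Finset ℕ) :
    ∀ m, s.card ≤ m →
      coeff m ((∏ p ∈ s, lin (y p)) * geom x) = x ^ (m - s.card) * ∏ p ∈ s, (x + y p) := by
  induction s using Finset.cons_induction with
  | empty => intro m _; simp [coeff_geom]
  | cons a s ha ih =>
    intro m hm
    rw [Finset.card_cons] at hm
    rw [Finset.prod_cons, mul_assoc, coeff_lin_mul, ih m (by omega), if_neg (by omega),
      ih (m - 1) (by omega), Finset.prod_cons, Finset.card_cons]
    rw [show m - s.card = (m - 1 - s.card) + 1 from by omega,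
      show m - (s.card + 1) = m - 1 - s.card from by omega, pow_succ]
    ring

lemma prod_Ici_fin {n : ℕ} (i : Fin n) (g : ℕ → R) :
    ∏ j ∈ Finset.Ici i, g ((j : ℕ) + 1) = ∏ p ∈ Finset.Icc ((i : ℕ) + 1) n, g p := by
  apply Finset.prod_nbij' (fun j : Fin n => (j : ℕ) + 1)
      (fun p : ℕ => if h : p - 1 < n then (⟨p - 1, h⟩ : Fin n) else i)
  · intro a ha
    simp only [Finset.mem_Ici, Fin.le_def] at ha
    simp only [Finset.mem_Icc]
    omega
  · intro p hp
    simp only [Finset.mem_Icc] at hp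
    rw [dif_pos (by omega)]
    simp only [Finset.mem_Ici, Fin.le_def]
    omega
  · intro a _
    rw [dif_pos (by omega : (a : ℕ) + 1 - 1 < n)]
    apply Fin.ext
    show (a : ℕ) + 1 - 1 = (a : ℕ)
    omega
  · intro p hp
    simp only [Finset.mem_Icc] at hp
    rw [dif_pos (by omega)]
    show p - 1 + 1 = p
    omega
  · intro a _; rfl

lemma sum_Ici_fin {n : ℕ} (i : Fin n) (f : ℕ → R) :
    ∑ k : Fin n, (if (i : ℕ) ≤ (k : ℕ) then f ((k : ℕ) + 1) else 0)
      = ∑ p ∈ Finset.Icc ((i : ℕ) + 1) n, f p := by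
  rw [← Finset.sum_filter]
  rw [show Finset.filter (fun k : Fin n => (i : ℕ) ≤ (k : ℕ)) Finset.univ = Finset.Ici i from by
    ext k; simp only [Finset.mem_filter, Finset.mem_univ, true_and, Finset.mem_Ici, Fin.le_def]]
  apply Finset.sum_nbij' (fun j : Fin n => (j : ℕ) + 1)
      (fun p : ℕ => if h : p - 1 < n then (⟨p - 1, h⟩ : Fin n) else i)
  · intro a ha
    simp only [Finset.mem_Ici, Fin.le_def] at ha
    simp only [Finset.mem_Icc]
    omega
  · intro p hp
    simp only [Finset.mem_Icc] at hp
    rw [dif_pos (by omega)]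
    simp only [Finset.mem_Ici, Fin.le_def]
    omega
  · intro a _
    rw [dif_pos (by omega : (a : ℕ) + 1 - 1 < n)]
    apply Fin.ext
    show (a : ℕ) + 1 - 1 = (a : ℕ)
    omega
  · intro p hp
    simp only [Finset.mem_Icc] at hp
    rw [dif_pos (by omega)]
    show p - 1 + 1 = p
    omega
  · intro a _; rfl

lemma hfun_eq_coeff (x a : ℕ → R) (n i' : ℕ) (h1 : 1 ≤ i') (h2 : i' ≤ n) (mu j' : ℕ)
    (hj1 : 1 ≤ j') (hj2 : j' ≤ n) :
    hfun x a i' n ((mu : ℤ) - j' + i')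
      = coeff (mu + (n - j'))
          (X ^ (n - i') * ((∏ ℓ ∈ Icc i' n, geom (x ℓ)) *
            ∏ k ∈ Finset.range (mu + (n - j')), lin (a (k + 1)))) := by
  rw [PowerSeries.coeff_X_pow_mul', hfun]
  by_cases hc : (mu : ℤ) - j' + i' < 0
  · rw [if_pos hc, if_neg (by omega)]
  · rw [if_neg hc, if_pos (by omega)]
    have e1 : ((mu : ℤ) - j' + i').toNat = mu + (n - j') - (n - i') := by omega
    have e2 : mu + (n - j') - (n - i') + n - i' = mu + (n - j') := by omega
    rw [e1, e2]

theorem stmt19' (n : ℕ) (x y a : ℕ → R)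
    (mu : ℕ → ℕ) :
    Matrix.det (Matrix.of fun i j : Fin n =>
        (x ((i : ℕ) + 1) + y ((i : ℕ) + 1)) *
          PowerSeries.coeff (mu ((j : ℕ) + 1) + (n - 1 - (j : ℕ)))
            ((∏ ℓ ∈ Finset.Icc ((i : ℕ) + 1) n, geom (x ℓ)) *
              (∏ p ∈ Finset.Icc ((i : ℕ) + 2) n, lin (y p)) *
              ∏ k ∈ Finset.range (mu ((j : ℕ) + 1) + (n - 1 - (j : ℕ))),
                lin (a (k + 1)))) =
    (∏ i : Fin n, ∏ j ∈ Finset.Ici i, (x ((i : ℕ) + 1) + y ((j : ℕ) + 1))) *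
    Matrix.det (Matrix.of fun i j : Fin n =>
        hfun x a ((i : ℕ) + 1) n
          ((mu ((j : ℕ) + 1) : ℤ) - ((j : ℕ) + 1) + ((i : ℕ) + 1))) := by
  classical
  set M : Matrix (Fin n) (Fin n) R := Matrix.of (fun i k : Fin n =>
    if (i : ℕ) ≤ (k : ℕ) then
      (x ((i : ℕ) + 1) + y ((i : ℕ) + 1)) *
        coeff (n - ((k : ℕ) + 1))
          ((∏ p ∈ Finset.Icc ((i : ℕ) + 1 + 1) n, lin (y p)) *
            ∏ ℓ ∈ Finset.Icc ((i : ℕ) + 1) ((k : ℕ) + 1), geom (x ℓ))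
    else 0) with hM
  set Bm : Matrix (Fin n) (Fin n) R := Matrix.of (fun i j : Fin n =>
    hfun x a ((i : ℕ) + 1) n
      ((mu ((j : ℕ) + 1) : ℤ) - ((j : ℕ) + 1) + ((i : ℕ) + 1))) with hBm
  have hAB : (Matrix.of fun i j : Fin n =>
      (x ((i : ℕ) + 1) + y ((i : ℕ) + 1)) *
        PowerSeries.coeff (mu ((j : ℕ) + 1) + (n - 1 - (j : ℕ)))
          ((∏ ℓ ∈ Finset.Icc ((i : ℕ) + 1) n, geom (x ℓ)) *
            (∏ p ∈ Finset.Icc ((i : ℕ) + 2) n, lin (y p)) *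
            ∏ k ∈ Finset.range (mu ((j : ℕ) + 1) + (n - 1 - (j : ℕ))),
              lin (a (k + 1)))) = M * Bm := by
    ext i j
    rw [Matrix.mul_apply, hM, hBm]
    simp only [Matrix.of_apply, ite_mul, zero_mul]
    have hmj : n - 1 - (j : ℕ) = n - ((j : ℕ) + 1) := by omega
    rw [hmj]
    have hrw : ∀ k : Fin n,
        hfun x a ((k : ℕ) + 1) n ((mu ((j : ℕ) + 1) : ℤ) - ((j : ℕ) + 1) + ((k : ℕ) + 1))
          = coeff (mu ((j : ℕ) + 1) + (n - ((j : ℕ) + 1)))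
              (X ^ (n - ((k : ℕ) + 1)) * ((∏ ℓ ∈ Finset.Icc ((k : ℕ) + 1) n, geom (x ℓ)) *
                ∏ kk ∈ Finset.range (mu ((j : ℕ) + 1) + (n - ((j : ℕ) + 1))),
                  lin (a (kk + 1)))) := by
      intro k
      rw [show ((mu ((j : ℕ) + 1) : ℤ) - ((j : ℕ) + 1) + ((k : ℕ) + 1))
          = ((mu ((j : ℕ) + 1) : ℤ) - ((((j : ℕ) + 1 : ℕ)) : ℤ) + ((((k : ℕ) + 1 : ℕ)) : ℤ))
          from by push_cast; ring]
      exact hfun_eq_coeff x a n ((k : ℕ) + 1) (by omega) (by omega)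
        (mu ((j : ℕ) + 1)) ((j : ℕ) + 1) (by omega) (by omega)
    simp only [hrw]
    have hsum := sum_Ici_fin (R := R) i (fun p =>
      ((x ((i : ℕ) + 1) + y ((i : ℕ) + 1)) *
        coeff (n - p)
          ((∏ pp ∈ Finset.Icc ((i : ℕ) + 1 + 1) n, lin (y pp)) *
            ∏ ℓ ∈ Finset.Icc ((i : ℕ) + 1) p, geom (x ℓ))) *
        coeff (mu ((j : ℕ) + 1) + (n - ((j : ℕ) + 1)))
          (X ^ (n - p) * ((∏ ℓ ∈ Finset.Icc p n, geom (x ℓ)) *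
            ∏ kk ∈ Finset.range (mu ((j : ℕ) + 1) + (n - ((j : ℕ) + 1))),
              lin (a (kk + 1)))))
    rw [hsum]
    have hmas := master x y n ((i : ℕ) + 1) (by omega) (by omega)
    rw [show (∏ ℓ ∈ Finset.Icc ((i : ℕ) + 1) n, geom (x ℓ)) *
          (∏ p ∈ Finset.Icc ((i : ℕ) + 2) n, lin (y p))
        = (∏ p ∈ Finset.Icc ((i : ℕ) + 1 + 1) n, lin (y p)) *
          ∏ ℓ ∈ Finset.Icc ((i : ℕ) + 1) n, geom (x ℓ) from mul_comm _ _]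
    rw [hmas, Finset.sum_mul, map_sum, Finset.mul_sum]
    apply Finset.sum_congr rfl
    intro p _
    rw [show (C (coeff (n - p)
            ((∏ pp ∈ Finset.Icc ((i : ℕ) + 1 + 1) n, lin (y pp)) *
              ∏ ℓ ∈ Finset.Icc ((i : ℕ) + 1) p, geom (x ℓ))) * X ^ (n - p) *
            ∏ ℓ ∈ Finset.Icc p n, geom (x ℓ)) *
          ∏ kk ∈ Finset.range (mu ((j : ℕ) + 1) + (n - ((j : ℕ) + 1))), lin (a (kk + 1))
        = C (coeff (n - p)
            ((∏ pp ∈ Finset.Icc ((i : ℕ) + 1 + 1) n, lin (y pp)) *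
              ∏ ℓ ∈ Finset.Icc ((i : ℕ) + 1) p, geom (x ℓ))) *
            (X ^ (n - p) * ((∏ ℓ ∈ Finset.Icc p n, geom (x ℓ)) *
              ∏ kk ∈ Finset.range (mu ((j : ℕ) + 1) + (n - ((j : ℕ) + 1))),
                lin (a (kk + 1)))) from by ring]
    rw [PowerSeries.coeff_C_mul]
    ring
  rw [hAB, Matrix.det_mul]
  have htri : M.BlockTriangular id := by
    intro p q hpq
    rw [hM]
    simp only [Matrix.of_apply]
    rw [if_neg]
    simp only [id_eq, Fin.lt_def] at hpq
    omega
  rw [Matrix.det_of_upperTriangular htri]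
  congr 1
  apply Finset.prod_congr rfl
  intro i _
  rw [hM]
  simp only [Matrix.of_apply, le_refl, if_pos]
  rw [Finset.Icc_self, Finset.prod_singleton]
  rw [coeff_prod_lin_mul_geom y (x ((i : ℕ) + 1)) _ _ (by rw [Nat.card_Icc]; omega)]
  rw [Nat.card_Icc]
  rw [show n - ((i : ℕ) + 1) - (n + 1 - ((i : ℕ) + 1 + 1)) = 0 from by omega, pow_zero, one_mul]
  have h1 : ∏ j ∈ Finset.Ici i, (x ((i : ℕ) + 1) + y ((j : ℕ) + 1))
      = ∏ p ∈ Finset.Icc ((i : ℕ) + 1) n, (x ((i : ℕ) + 1) + y p) :=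
    prod_Ici_fin i (fun p => x ((i : ℕ) + 1) + y p)
  rw [h1, Icc_bot_insert (show (i : ℕ) + 1 ≤ n from by omega),
    Finset.prod_insert (by simp)]

end TokuyamaAux

/-- Factorial Tokuyama-type factorization (Schur case, determinantal form):
det((x_i+y_i)·q_{λ_j−1}(x^{(i)};y^{(i+1)}|a)) = ∏_{i≤j}(x_i+y_j)·det(h_{μ_j−j+i}(x^{(i)}|a)),
where λ_j = μ_j + n − j + 1. Indices are 1-based via i ↦ i+1 for i : Fin n. -/
theorem stmt19 {R : Type*} [CommRing R] (n : ℕ) (x y a : ℕ → R)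
    (mu : ℕ → ℕ) (hmu : ∀ j, mu (j + 1) ≤ mu j) :
    Matrix.det (Matrix.of fun i j : Fin n =>
        (x ((i : ℕ) + 1) + y ((i : ℕ) + 1)) *
          PowerSeries.coeff (mu ((j : ℕ) + 1) + (n - 1 - (j : ℕ)))
            ((∏ ℓ ∈ Finset.Icc ((i : ℕ) + 1) n, geom (x ℓ)) *
              (∏ p ∈ Finset.Icc ((i : ℕ) + 2) n, lin (y p)) *
              ∏ k ∈ Finset.range (mu ((j : ℕ) + 1) + (n - 1 - (j : ℕ))),
                lin (a (k + 1)))) =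
    (∏ i : Fin n, ∏ j ∈ Finset.Ici i, (x ((i : ℕ) + 1) + y ((j : ℕ) + 1))) *
    Matrix.det (Matrix.of fun i j : Fin n =>
        hfun x a ((i : ℕ) + 1) n
          ((mu ((j : ℕ) + 1) : ℤ) - ((j : ℕ) + 1) + ((i : ℕ) + 1))) := by
  exact stmt19' n x y a mu
end
end
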